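/- Let p be a prime and let c_1,...,c_k ∈ ℤ/pℤ. If Σ_{s∈I} c_s ≠ 0 for every nonempty subset I ⊆ {1,...,k}, then the set { Σ_{s∈I} c_s : I nonempty, I ⊆ {1,...,k} } has at least k elements. -/
import Mathlib


/-- **Remark 3.2(b).**
If `c₁,…,c_k ∈ ℤ/pℤ` with `p` a prime, and `∑_{s∈I} c_s = 0` for no nonempty
`I ⊆ {1,…,k}`, then `{ ∑_{s∈I} c_s : ∅ ≠ I ⊆ {1,…,k} }` has at least `k` elements. -/
theorem stmt13 (p : ℕ) (hp : p.Prime) (k : ℕ) (c : Fin k → ZMod p)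
    (hzero : ∀ I : Finset (Fin k), I.Nonempty → (∑ s ∈ I, c s) ≠ 0) :
    k ≤ {x : ZMod p | ∃ I : Finset (Fin k), I.Nonempty ∧ (∑ s ∈ I, c s) = x}.ncard := by
  haveI : NeZero p := ⟨hp.pos.ne'⟩
  set f : Fin k → ZMod p := fun j => ∑ s ∈ Finset.Iic j, c s with hf
  have key : ∀ i j : Fin k, i < j → f i ≠ f j := by
    intro i j h hij
    have hsub : Finset.Iic i ⊆ Finset.Iic j := Finset.Iic_subset_Iic.mpr h.le
    have hzero' : ∑ s ∈ Finset.Iic j \ Finset.Iic i, c s = 0 := by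
      rw [Finset.sum_sdiff_eq_sub hsub]
      simp only [hf] at hij
      rw [← hij, sub_self]
    have hne' : (Finset.Iic j \ Finset.Iic i).Nonempty :=
      ⟨j, by simp [h.not_ge]⟩
    exact hzero _ hne' hzero'
  have hinj : Function.Injective f := by
    intro i j hij
    by_contra hne
    rcases lt_or_gt_of_ne hne with h | h
    · exact key i j h hij
    · exact key j i h hij.symm
  calc k = (Finset.univ.image f).card := by
        rw [Finset.card_image_of_injective _ hinj, Finset.card_univ, Fintype.card_fin]
    _ ≤ _ := by
        rw [← Set.ncard_coe_finset]
        apply Set.ncard_le_ncard _ (Set.toFinite _)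
        intro x hx
        simp only [Finset.coe_image, Set.mem_image, Finset.mem_coe] at hx
        obtain ⟨j, -, rfl⟩ := hx
        exact ⟨Finset.Iic j, Finset.nonempty_Iic, rfl⟩
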